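/- Let S⁺, S⁻ ⊆ Mⁿ be finite sets of points in a metric space (Mⁿ, dₙ), let k be an odd positive integer, and define the optimistic k-NN classifier f(x̄) = 1 iff there exists T ⊆ S⁺ ∪ S⁻ of size k with a majority of points in S⁺ such that dₙ(x̄, ȳ) ≤ dₙ(x̄, z̄) for all ȳ ∈ T and z̄ ∈ (S⁺ ∪ S⁻) \ T. Then f(x̄) = 1 if and only if there exist A ⊆ S⁺ of size (k+1)/2 and B ⊆ S⁻ of size at most (k−1)/2 such that dₙ(x̄, ā) ≤ dₙ(x̄, c̄) for every ā ∈ A and c̄ ∈ S⁻ \ B. -/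

import Mathlib

open Finset

/-- For any function into a linear order, a finset of size ≥ k has a k-element
subset consisting of "k smallest" elements. -/
lemma exists_k_smallest {α β : Type*} [DecidableEq α] [LinearOrder β] (f : α → β) :
    ∀ (k : ℕ) (s : Finset α), k ≤ s.card →
    ∃ T ⊆ s, T.card = k ∧ ∀ y ∈ T, ∀ z ∈ s \ T, f y ≤ f z := by
  intro k
  induction k with
  | zero => exact fun s _ => ⟨∅, empty_subset _, rfl, by simp⟩
  | succ k ih =>
    intro s hs
    have hne : s.Nonempty := card_pos.mp (by omega)
    obtain ⟨m, hm, hmin⟩ := s.exists_min_image f hne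
    have hk : k ≤ (s.erase m).card := by rw [card_erase_of_mem hm]; omega
    obtain ⟨T, hTs, hTc, hT⟩ := ih (s.erase m) hk
    have hmT : m ∉ T := fun h => (mem_erase.mp (hTs h)).1 rfl
    refine ⟨insert m T, ?_, ?_, ?_⟩
    · exact insert_subset hm (hTs.trans (erase_subset _ _))
    · rw [card_insert_of_notMem hmT, hTc]
    · intro y hy z hz
      rw [mem_sdiff, mem_insert, not_or] at hz
      rcases mem_insert.mp hy with rfl | hyT
      · exact hmin z hz.1
      · exact hT y hyT z (by rw [mem_sdiff, mem_erase]; exact ⟨⟨hz.2.1, hz.1⟩, hz.2.2⟩)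

/-- Proposition 1(a): characterization of the optimistic k-NN classifier's positive value. -/
theorem optimistic_knn_pos_characterization
    {M : Type*} {n : ℕ} [DecidableEq (Fin n → M)]
    (d : (Fin n → M) → (Fin n → M) → ℝ)
    (hd_nonneg : ∀ a b, 0 ≤ d a b)
    (hd_symm : ∀ a b, d a b = d b a)
    (hd_triangle : ∀ a b c, d a c ≤ d a b + d b c)
    (hd_eq : ∀ a b, d a b = 0 ↔ a = b)
    (k : ℕ) (hk_odd : Odd k) (hk_pos : 1 ≤ k)
    (Sp Sm : Finset (Fin n → M)) (hdisj : Disjoint Sp Sm)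
    (hcard : k ≤ (Sp ∪ Sm).card)
    (x : Fin n → M) :
    (∃ T ⊆ Sp ∪ Sm, T.card = k ∧ k < 2 * (T ∩ Sp).card ∧
      ∀ y ∈ T, ∀ z ∈ (Sp ∪ Sm) \ T, d x y ≤ d x z) ↔
    (∃ A ⊆ Sp, A.card = (k + 1) / 2 ∧ ∃ B ⊆ Sm, B.card ≤ (k - 1) / 2 ∧
      ∀ a ∈ A, ∀ c ∈ Sm \ B, d x a ≤ d x c) := by
  obtain ⟨t, ht⟩ := hk_odd
  constructor
  · rintro ⟨T, hTsub, hTcard, hmaj, hnear⟩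
    -- split T into positive and negative parts
    have hsplit : (T ∩ Sp).card + (T ∩ Sm).card = k := by
      rw [← hTcard, ← card_union_of_disjoint
        (Finset.disjoint_of_subset_left (inter_subset_right)
          (Finset.disjoint_of_subset_right (inter_subset_right) hdisj))]
      congr 1
      rw [← inter_union_distrib_left]
      exact (inter_eq_left.mpr hTsub)
    have hA0 : (k + 1) / 2 ≤ (T ∩ Sp).card := by omega
    obtain ⟨A, hAsub, hAcard⟩ := Finset.exists_subset_card_eq hA0
    refine ⟨A, hAsub.trans inter_subset_right, hAcard, T ∩ Sm,
      inter_subset_right, by omega, ?_⟩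
    intro a ha c hc
    rw [mem_sdiff, mem_inter, not_and] at hc
    have hcT : c ∉ T := fun h => hc.2 h hc.1
    exact hnear a (inter_subset_left (hAsub ha)) c
      (mem_sdiff.mpr ⟨mem_union_right _ hc.1, hcT⟩)
  · rintro ⟨A, hAsub, hAcard, B, hBsub, hBcard, hnear⟩
    classical
    -- key function: lexicographic (distance, in Sm, not in B)
    set f : (Fin n → M) → ℝ ×ₗ (Bool ×ₗ Bool) :=
      fun z => toLex (d x z, toLex (decide (z ∈ Sm), decide (z ∉ B))) with hf
    obtain ⟨T, hTsub, hTcard, hT⟩ := exists_k_smallest f k (Sp ∪ Sm) hcard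
    refine ⟨T, hTsub, hTcard, ?_, ?_⟩
    · -- majority argument
      by_contra hmaj
      push_neg at hmaj
      have hsplit : (T ∩ Sp).card + (T ∩ Sm).card = k := by
        rw [← hTcard, ← card_union_of_disjoint
          (Finset.disjoint_of_subset_left (inter_subset_right)
            (Finset.disjoint_of_subset_right (inter_subset_right) hdisj))]
        congr 1
        rw [← inter_union_distrib_left]
        exact (inter_eq_left.mpr hTsub)
      -- T ∩ (Sm \ B) is nonempty
      have h1 : B.card + 1 ≤ (T ∩ Sm).card := by omega
      have h2 : (T ∩ (Sm \ B)).Nonempty := by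
        rw [← card_pos]
        have : T ∩ Sm ⊆ (T ∩ (Sm \ B)) ∪ B := by
          intro z hz
          rw [mem_inter] at hz
          by_cases hzB : z ∈ B
          · exact mem_union_right _ hzB
          · exact mem_union_left _ (by rw [mem_inter, mem_sdiff]; exact ⟨hz.1, hz.2, hzB⟩)
        have := (card_le_card this).trans (card_union_le _ _)
        omega
      obtain ⟨c, hc⟩ := h2
      rw [mem_inter, mem_sdiff] at hc
      -- every a ∈ A is in T
      have hAT : A ⊆ T := by
        intro a ha
        by_contra haT
        have hfc : f c ≤ f a := hT c hc.1 a
          (mem_sdiff.mpr ⟨mem_union_left _ (hAsub ha), haT⟩)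
        have hd : d x a ≤ d x c := hnear a ha c (mem_sdiff.mpr hc.2)
        have haSm : a ∉ Sm := Finset.disjoint_left.mp hdisj (hAsub ha)
        rw [hf, Prod.Lex.le_iff] at hfc
        rcases hfc with hlt | ⟨heq, hle⟩
        · simp only [ofLex_toLex] at hlt; linarith
        · rw [Prod.Lex.le_iff] at hle
          simp [hc.2.1, haSm] at hle
          exact absurd hle (by decide)
      have := card_le_card (fun z hz => mem_inter.mpr ⟨hAT hz, hAsub hz⟩)
      rw [hAcard] at this
      omega
    · intro y hy z hz
      have := hT y hy z hz
      rw [hf, Prod.Lex.le_iff] at this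
      rcases this with h | ⟨h, _⟩
      · exact le_of_lt h
      · exact le_of_eq h
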